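/- Let H, W, k be integers with k ≥ 2, k ∣ H, and k ∣ W. Then there exists an image X : ℤ → ℤ → ℂ such that: (i) its 2D discrete Fourier transform on the 2H×2W grid satisfies F_X(u,v) = 0 for every integer u with -H/k ≤ u ≤ H/k - 1 and every integer v with -W/k ≤ v ≤ W/k - 1 (i.e., X has no content in the low-frequency region); and yet (ii) the nearest-neighbor k-fold down-sampled image D(X)(x',y') := (1/k²)·Σ_{s=0}^{k-1} Σ_{t=0}^{k-1} X(kx'+s, ky'+t) is not identically zero on the grid of points (x',y') with -H/k ≤ x' ≤ H/k - 1 and -W/k ≤ y' ≤ W/k - 1. In other words, nearest-neighbor down-sampling has a nonzero dependency on the higher-frequency spectrum of the original image. -/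

import Mathlib

/-- The 2D discrete Fourier transform of an image `Z : ℤ → ℤ → ℂ` on the `2M × 2N` grid:
`F_Z(u,v) = ∑_{x=-M}^{M-1} ∑_{y=-N}^{N-1} Z(x,y)·exp(-2πi(ux/(2M) + vy/(2N)))`. -/
noncomputable def dft (M N : ℤ) (Z : ℤ → ℤ → ℂ) (u v : ℤ) : ℂ :=
  ∑ x ∈ Finset.Icc (-M) (M - 1), ∑ y ∈ Finset.Icc (-N) (N - 1),
    Z x y * Complex.exp (-(2 * (Real.pi : ℂ) * Complex.I) *
      ((u : ℂ) * (x : ℂ) / (2 * (M : ℂ)) + (v : ℂ) * (y : ℂ) / (2 * (N : ℂ))))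

/-- The nearest-neighbor `k`-fold down-sampled image:
`D(X)(x',y') = (1/k²) ∑_{s=0}^{k-1} ∑_{t=0}^{k-1} X(kx'+s, ky'+t)`. -/
noncomputable def nnDownsample (k : ℤ) (X : ℤ → ℤ → ℂ) (x' y' : ℤ) : ℂ :=
  (1 / (k : ℂ) ^ 2) *
    ∑ s ∈ Finset.Icc (0 : ℤ) (k - 1), ∑ t ∈ Finset.Icc (0 : ℤ) (k - 1),
      X (k * x' + s) (k * y' + t)

/-- Reindex a zpow-sum over an integer interval as a nat geometric sum. -/
lemma sum_zpow_Icc (r : ℂ) (hr : r ≠ 0) (a b : ℤ) :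
    ∑ x ∈ Finset.Icc a b, r ^ x
      = r ^ a * ∑ j ∈ Finset.range (b + 1 - a).toNat, r ^ j := by
  have hmap : Finset.Icc a b
      = Finset.map ⟨fun j : ℕ => a + (j : ℤ), fun x y h => by simpa using h⟩
          (Finset.range (b + 1 - a).toNat) := by
    ext x
    simp only [Finset.mem_map, Finset.mem_range, Finset.mem_Icc,
      Function.Embedding.coeFn_mk]
    constructor
    · intro ⟨h1, h2⟩
      exact ⟨(x - a).toNat, by omega, by show a + (((x - a).toNat : ℕ) : ℤ) = x; omega⟩
    · rintro ⟨j, hj, rfl⟩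
      show a ≤ a + (j : ℤ) ∧ a + (j : ℤ) ≤ b
      omega
  rw [hmap, Finset.sum_map, Finset.mul_sum]
  refine Finset.sum_congr rfl fun j _ => ?_
  show r ^ (a + (j : ℤ)) = r ^ a * r ^ j
  rw [zpow_add₀ hr, zpow_natCast]

/-- `exp(π i a / b) ≠ 1` when `1 ≤ a ≤ b`. -/
lemma exp_ne_one_of_le (a b : ℤ) (h1 : 1 ≤ a) (h2 : a ≤ b) :
    Complex.exp ((Real.pi : ℂ) * Complex.I * (a : ℂ) / (b : ℂ)) ≠ 1 := by
  have hb : (0 : ℤ) < b := lt_of_lt_of_le h1 h2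
  have hbC : (b : ℂ) ≠ 0 := Int.cast_ne_zero.mpr (by omega)
  have hπ : (Real.pi : ℂ) ≠ 0 := Complex.ofReal_ne_zero.mpr Real.pi_ne_zero
  intro hcon
  rw [Complex.exp_eq_one_iff] at hcon
  obtain ⟨n, hn⟩ := hcon
  have hπI : (Real.pi : ℂ) * Complex.I ≠ 0 := mul_ne_zero hπ Complex.I_ne_zero
  field_simp at hn
  have ha : (a : ℂ) = 2 * (n : ℂ) * (b : ℂ) := by
    apply mul_left_cancel₀ hπI
    ring_nf
    ring_nf at hn
    linear_combination ((Real.pi : ℂ) * Complex.I) * hn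
  have haZ : a = 2 * n * b := by exact_mod_cast ha
  rcases le_or_gt n 0 with hn0 | hn0
  · nlinarith
  · nlinarith

theorem stmt_3 (H W k : ℤ) (hH : 0 < H) (hW : 0 < W) (hk : 2 ≤ k)
    (hkH : k ∣ H) (hkW : k ∣ W) :
    ∃ X : ℤ → ℤ → ℂ,
      (∀ u v : ℤ, -(H / k) ≤ u → u ≤ H / k - 1 → -(W / k) ≤ v → v ≤ W / k - 1 →
        dft H W X u v = 0) ∧
      ∃ x' y' : ℤ, -(H / k) ≤ x' ∧ x' ≤ H / k - 1 ∧ -(W / k) ≤ y' ∧ y' ≤ W / k - 1 ∧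
        nnDownsample k X x' y' ≠ 0 := by
  obtain ⟨m, hm⟩ := hkH
  have hk0 : (0 : ℤ) < k := by omega
  have hdiv : H / k = m := by rw [hm, Int.mul_ediv_cancel_left _ (by omega)]
  have hm1 : 1 ≤ m := by nlinarith
  have hWdiv1 : 1 ≤ W / k := by
    obtain ⟨n, hn⟩ := hkW
    have : W / k = n := by rw [hn, Int.mul_ediv_cancel_left _ (by omega)]
    rw [this]; nlinarith
  have hkC : (k : ℂ) ≠ 0 := Int.cast_ne_zero.mpr (by omega)
  have hHC : (H : ℂ) ≠ 0 := Int.cast_ne_zero.mpr (by omega)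
  have hWC : (W : ℂ) ≠ 0 := Int.cast_ne_zero.mpr (by omega)
  have hmC : (m : ℂ) ≠ 0 := Int.cast_ne_zero.mpr (by omega)
  have hHm : (H : ℂ) = (k : ℂ) * (m : ℂ) := by exact_mod_cast congrArg (Int.cast : ℤ → ℂ) hm
  refine ⟨fun x _ => Complex.exp ((Real.pi : ℂ) * Complex.I * (x : ℂ) / (k : ℂ)), ?_, ?_⟩
  · -- low frequencies vanish
    intro u v hu1 hu2 _ _
    rw [hdiv] at hu1 hu2
    set r : ℂ := Complex.exp ((Real.pi : ℂ) * Complex.I * ((m - u : ℤ) : ℂ) / (H : ℂ)) with hrdef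
    set g : ℂ := Complex.exp (-((Real.pi : ℂ) * Complex.I * (v : ℂ) / (W : ℂ))) with hgdef
    have hr0 : r ≠ 0 := Complex.exp_ne_zero _
    have hr1 : r ≠ 1 := exp_ne_one_of_le (m - u) H (by omega) (by nlinarith)
    have key : dft H W (fun x _ => Complex.exp ((Real.pi : ℂ) * Complex.I * (x : ℂ) / (k : ℂ))) u v
        = (∑ x ∈ Finset.Icc (-H) (H - 1), r ^ x) *
          (∑ y ∈ Finset.Icc (-W) (W - 1), g ^ y) := by
      rw [Finset.sum_mul_sum]
      unfold dft
      refine Finset.sum_congr rfl fun x _ => Finset.sum_congr rfl fun y _ => ?_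
      rw [hrdef, hgdef, ← Complex.exp_int_mul, ← Complex.exp_int_mul, ← Complex.exp_add,
        ← Complex.exp_add]
      congr 1
      push_cast
      field_simp
      rw [hHm]
      ring
    rw [key]
    have hxsum : (∑ x ∈ Finset.Icc (-H) (H - 1), r ^ x) = 0 := by
      rw [sum_zpow_Icc r hr0]
      have hpow : r ^ (H - 1 + 1 - -H).toNat = 1 := by
        have h2H : ((H - 1 + 1 - -H).toNat : ℤ) = 2 * H := by omega
        have : r ^ ((H - 1 + 1 - -H).toNat : ℤ) = 1 := by
          rw [h2H, hrdef, ← Complex.exp_int_mul]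
          rw [show ((2 * H : ℤ) : ℂ) * ((Real.pi : ℂ) * Complex.I * ((m - u : ℤ) : ℂ) / (H : ℂ))
              = ((m - u : ℤ) : ℂ) * (2 * (Real.pi : ℂ) * Complex.I) by
            push_cast; field_simp]
          exact Complex.exp_int_mul_two_pi_mul_I _
        rwa [zpow_natCast] at this
      rw [geom_sum_eq hr1, hpow]
      simp
    rw [hxsum, zero_mul]
  · -- downsample nonzero at (0,0)
    refine ⟨0, 0, by omega, by omega, by omega, by omega, ?_⟩
    unfold nnDownsample
    set ρ : ℂ := Complex.exp ((Real.pi : ℂ) * Complex.I / (k : ℂ)) with hρdef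
    have hρ0 : ρ ≠ 0 := Complex.exp_ne_zero _
    have hρ1 : ρ ≠ 1 := by
      have := exp_ne_one_of_le 1 k (le_refl _) (by omega)
      simpa using this
    have hterm : ∀ s t : ℤ,
        Complex.exp ((Real.pi : ℂ) * Complex.I * ((k * (0:ℤ) + s : ℤ) : ℂ) / (k : ℂ)) = ρ ^ s := by
      intro s t
      rw [hρdef, ← Complex.exp_int_mul]
      congr 1
      push_cast
      ring
    have hsum : (∑ s ∈ Finset.Icc (0:ℤ) (k - 1), ∑ t ∈ Finset.Icc (0:ℤ) (k - 1),
        Complex.exp ((Real.pi : ℂ) * Complex.I * ((k * (0:ℤ) + s : ℤ) : ℂ) / (k : ℂ)))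
        = (k : ℂ) * ∑ s ∈ Finset.Icc (0:ℤ) (k - 1), ρ ^ s := by
      rw [Finset.mul_sum]
      refine Finset.sum_congr rfl fun s _ => ?_
      rw [Finset.sum_const, hterm s 0]
      have hcard : (Finset.Icc (0:ℤ) (k - 1)).card = k.toNat := by
        rw [Int.card_Icc]; omega
      rw [hcard, nsmul_eq_mul]
      congr 1
      exact_mod_cast Int.toNat_of_nonneg (by omega : (0:ℤ) ≤ k)
    have hgeo : (∑ s ∈ Finset.Icc (0:ℤ) (k - 1), ρ ^ s) ≠ 0 := by
      rw [sum_zpow_Icc ρ hρ0]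
      have hpow : ρ ^ (k - 1 + 1 - 0).toNat = -1 := by
        have hkN : ((k - 1 + 1 - 0).toNat : ℤ) = k := by omega
        have : ρ ^ ((k - 1 + 1 - 0).toNat : ℤ) = -1 := by
          rw [hkN, hρdef, ← Complex.exp_int_mul]
          rw [show (k : ℂ) * ((Real.pi : ℂ) * Complex.I / (k : ℂ)) = (Real.pi : ℂ) * Complex.I by
            field_simp]
          exact Complex.exp_pi_mul_I
        rwa [zpow_natCast] at this
      rw [geom_sum_eq hρ1, hpow]
      simp only [zpow_zero, one_mul]
      apply div_ne_zero
      · norm_num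
      · exact sub_ne_zero.mpr hρ1
    simp only [hsum]
    apply mul_ne_zero
    · apply one_div_ne_zero; exact pow_ne_zero _ hkC
    · exact mul_ne_zero hkC hgeo
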